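/- The number of forests of rooted trees on the vertex set {1,...,n} having exactly k components equals binomial(n-1, k-1) * n^(n-k), which also equals binomial(n,k) * k * n^(n-k-1), for n >= 1 and 1 <= k <= n. -/

import Mathlib

/-- Iterated parent map of a functional forest: `parentIter p m v` is the
`m`-fold application of the parent map `p` to `v` (as an `Option`). -/
def parentIter {n : ℕ} (p : Fin n → Option (Fin n)) : ℕ → Fin n → Option (Fin n)
  | 0, v => some v
  | m + 1, v => (parentIter p m v).bind p

/-- A parent map `p : Fin n → Option (Fin n)` encodes a forest of rooted trees on
the vertex set `{1,…,n}` iff from every vertex, iterating the parent map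
eventually reaches a root (i.e. the structure is acyclic).  The roots are the
vertices with `p v = none`, and the components (trees) of the forest correspond
bijectively to the roots. -/
def IsRootedForest {n : ℕ} (p : Fin n → Option (Fin n)) : Prop :=
  ∀ v : Fin n, ∃ m : ℕ, parentIter p m v = none

namespace ForestProof

variable {n : ℕ}

theorem parentIter_add (p : Fin n → Option (Fin n)) (a b : ℕ) (v : Fin n) :
    parentIter p (a + b) v = (parentIter p a v).bind (parentIter p b) := by
  induction b with
  | zero => cases h : parentIter p a v <;> simp [parentIter, h]
  | succ b ih =>
    show parentIter p (a + b + 1) v = _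
    rw [show a + b + 1 = (a + b) + 1 from rfl]
    simp only [parentIter, ih]
    cases h : parentIter p a v <;> simp [parentIter]

theorem iter_none_mono (p : Fin n → Option (Fin n)) {m m' : ℕ} {v : Fin n}
    (h : parentIter p m v = none) (hm : m ≤ m') : parentIter p m' v = none := by
  obtain ⟨d, rfl⟩ := Nat.exists_eq_add_of_le hm
  rw [parentIter_add, h]; rfl

theorem acyclic {p : Fin n → Option (Fin n)} (hp : IsRootedForest p) {m : ℕ} {v : Fin n}
    (h : parentIter p m v = some v) : m = 0 := by
  by_contra hm
  have key : ∀ j, parentIter p (j * m) v = some v := by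
    intro j
    induction j with
    | zero => simp [parentIter]
    | succ j ih => rw [Nat.succ_mul, parentIter_add, ih]; exact h
  obtain ⟨m0, hm0⟩ := hp v
  have h1 : parentIter p (m0 * m) v = none :=
    iter_none_mono p hm0 (Nat.le_mul_of_pos_right m0 (Nat.pos_of_ne_zero hm))
  rw [key m0] at h1
  exact Option.some_ne_none _ h1

def Reaches (p : Fin n → Option (Fin n)) (v w : Fin n) : Prop :=
  ∃ m : ℕ, parentIter p m v = some w

theorem iter_congr {p q : Fin n → Option (Fin n)} {x : Fin n}
    (hpq : ∀ w, w ≠ x → p w = q w) {v : Fin n} {m : ℕ}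
    (h : ∀ j, j < m → parentIter p j v ≠ some x) :
    ∀ j, j ≤ m → parentIter q j v = parentIter p j v := by
  intro j hj
  induction j with
  | zero => rfl
  | succ j ih =>
    have h1 : parentIter q j v = parentIter p j v := ih (Nat.le_of_succ_le hj)
    show (parentIter q j v).bind q = (parentIter p j v).bind p
    rw [h1]
    cases hc : parentIter p j v with
    | none => rfl
    | some w =>
      have hw : w ≠ x := by
        intro h'
        exact h j (Nat.lt_of_succ_le hj) (by rw [hc, h'])
      simp [(hpq w hw).symm]

theorem update_agree (p : Fin n → Option (Fin n)) (x : Fin n) (o : Option (Fin n)) :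
    ∀ w, w ≠ x → p w = Function.update p x o w := by
  intro w hw; rw [Function.update_of_ne hw]

theorem isRootedForest_update_none {p : Fin n → Option (Fin n)} (hp : IsRootedForest p)
    (x : Fin n) : IsRootedForest (Function.update p x none) := by
  intro v
  obtain ⟨m, hm⟩ := hp v
  by_cases hx : ∃ j, parentIter p j v = some x
  · set j := Nat.find hx with hjdef
    have hj : parentIter p j v = some x := Nat.find_spec hx
    have hmin : ∀ i, i < j → parentIter p i v ≠ some x := fun i hi => Nat.find_min hx hi
    have h1 : parentIter (Function.update p x none) j v = some x :=
      (iter_congr (update_agree p x none) hmin j le_rfl).trans hj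
    refine ⟨j + 1, ?_⟩
    show (parentIter (Function.update p x none) j v).bind _ = none
    rw [h1]
    simp
  · push_neg at hx
    exact ⟨m, (iter_congr (update_agree p x none) (fun j _ => hx j) m le_rfl).trans hm⟩

theorem isRootedForest_update_some {p : Fin n → Option (Fin n)} (hp : IsRootedForest p)
    {r u : Fin n} (hr : p r = none) (hu : ¬ Reaches p u r) :
    IsRootedForest (Function.update p r (some u)) := by
  set q := Function.update p r (some u) with hq
  have hur : ∀ j, parentIter p j u ≠ some r := fun j h => hu ⟨j, h⟩
  obtain ⟨mu, hmu⟩ := hp u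
  have hqu : parentIter q mu u = none :=
    (iter_congr (update_agree p r (some u)) (fun j _ => hur j) mu le_rfl).trans hmu
  intro v
  by_cases hx : ∃ j, parentIter p j v = some r
  · set j := Nat.find hx with hjdef
    have hj : parentIter p j v = some r := Nat.find_spec hx
    have hmin : ∀ i, i < j → parentIter p i v ≠ some r := fun i hi => Nat.find_min hx hi
    have h1 : parentIter q j v = some r :=
      (iter_congr (update_agree p r (some u)) hmin j le_rfl).trans hj
    have h2 : parentIter q (j + 1) v = some u := by
      show (parentIter q j v).bind q = some u
      rw [h1]
      simp [hq, Function.update_self]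
    refine ⟨j + 1 + mu, ?_⟩
    rw [parentIter_add, h2]
    exact hqu
  · push_neg at hx
    obtain ⟨m, hm⟩ := hp v
    exact ⟨m, (iter_congr (update_agree p r (some u)) (fun j _ => hx j) m le_rfl).trans hm⟩

section RootOf

variable {p : Fin n → Option (Fin n)} (hp : IsRootedForest p)

theorem find_pos (v : Fin n) : 0 < Nat.find (hp v) := by
  rcases Nat.eq_zero_or_pos (Nat.find (hp v)) with h | h
  · have := Nat.find_spec (hp v)
    rw [h] at this
    exact absurd this (by simp [parentIter])
  · exact h

noncomputable def rootOf (v : Fin n) : Fin n :=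
  (parentIter p (Nat.find (hp v) - 1) v).get (by
    rw [Option.isSome_iff_ne_none]
    exact Nat.find_min (hp v) (Nat.sub_lt (find_pos hp v) one_pos))

theorem rootOf_spec (v : Fin n) :
    parentIter p (Nat.find (hp v) - 1) v = some (rootOf hp v) := by
  simp [rootOf]

theorem p_rootOf (v : Fin n) : p (rootOf hp v) = none := by
  have h1 : parentIter p (Nat.find (hp v)) v = none := Nat.find_spec (hp v)
  have h2 : Nat.find (hp v) = (Nat.find (hp v) - 1) + 1 :=
    (Nat.succ_pred_eq_of_pos (find_pos hp v)).symm
  rw [h2] at h1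
  have : (parentIter p (Nat.find (hp v) - 1) v).bind p = none := h1
  rw [rootOf_spec hp v] at this
  simpa using this

theorem reaches_rootOf (v : Fin n) : Reaches p v (rootOf hp v) :=
  ⟨_, rootOf_spec hp v⟩

theorem rootOf_unique {v r : Fin n} {j : ℕ} (hj : parentIter p j v = some r)
    (hr : p r = none) : rootOf hp v = r := by
  have h1 : parentIter p (j + 1) v = none := by
    show (parentIter p j v).bind p = none
    rw [hj]; simpa using hr
  have h2 : Nat.find (hp v) ≤ j + 1 := Nat.find_min' (hp v) h1
  have h3 : j < Nat.find (hp v) := by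
    by_contra h
    push_neg at h
    have := iter_none_mono p (Nat.find_spec (hp v)) h
    rw [hj] at this
    exact Option.some_ne_none _ this
  have h4 : Nat.find (hp v) - 1 = j := by omega
  have := rootOf_spec hp v
  rw [h4, hj] at this
  exact (Option.some_injective _ this).symm

end RootOf

open Finset in
theorem nat_card_subtype {α : Type*} [Fintype α] (P : α → Prop) [DecidablePred P] :
    Nat.card {x // P x} = (Finset.univ.filter P).card := by
  rw [Nat.card_eq_fintype_card, Fintype.card_subtype]

theorem card_roots_update_none {p : Fin n → Option (Fin n)} {x : Fin n} (hx : p x ≠ none) :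
    Nat.card {v : Fin n // Function.update p x none v = none}
      = Nat.card {v : Fin n // p v = none} + 1 := by
  classical
  rw [nat_card_subtype, nat_card_subtype]
  have hset : Finset.univ.filter (fun v => Function.update p x none v = none)
      = insert x (Finset.univ.filter (fun v => p v = none)) := by
    ext v
    by_cases hv : v = x
    · subst hv; simp [Function.update_self]
    · simp [Function.update_of_ne hv, hv]
  rw [hset, Finset.card_insert_of_notMem (by simp [hx])]

theorem card_nonroots {p : Fin n → Option (Fin n)} {k : ℕ}
    (h : Nat.card {v : Fin n // p v = none} = k) :
    Nat.card {v : Fin n // p v ≠ none} = n - k := by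
  classical
  rw [Nat.card_eq_fintype_card] at h ⊢
  have hc := Fintype.card_subtype_compl (fun v : Fin n => p v = none)
  rw [h, Fintype.card_fin] at hc
  calc Fintype.card {v : Fin n // p v ≠ none}
      = Fintype.card {v : Fin n // ¬ p v = none} :=
        Fintype.card_congr (Equiv.subtypeEquivRight (fun v => Iff.rfl))
    _ = n - k := hc

theorem card_sigma_const {ι : Type*} [Finite ι] {f : ι → Type*} [∀ i, Finite (f i)] {c : ℕ}
    (h : ∀ i, Nat.card (f i) = c) : Nat.card (Σ i, f i) = Nat.card ι * c := by
  have e : (Σ i, f i) ≃ ι × Fin c :=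
    (Equiv.sigmaCongrRight (fun i => Finite.equivFinOfCardEq (h i))).trans
      (Equiv.sigmaEquivProd ι (Fin c))
  rw [Nat.card_congr e, Nat.card_prod, Nat.card_eq_fintype_card (α := Fin c), Fintype.card_fin]

theorem card_subtype_and_split {α : Type*} [Finite α] (P Q : α → Prop) :
    Nat.card {x // P x ∧ Q x} + Nat.card {x // P x ∧ ¬ Q x} = Nat.card {x // P x} := by
  classical
  have e : {x // P x} ≃ {x // P x ∧ Q x} ⊕ {x // P x ∧ ¬ Q x} :=
    { toFun := fun x => if h : Q x.1 then Sum.inl ⟨x.1, x.2, h⟩ else Sum.inr ⟨x.1, x.2, h⟩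
      invFun := Sum.elim (fun a => ⟨a.1, a.2.1⟩) (fun a => ⟨a.1, a.2.1⟩)
      left_inv := fun x => by by_cases h : Q x.1 <;> simp [h]
      right_inv := fun s => by
        rcases s with a | a
        · simp [dif_pos a.2.2]
        · simp [dif_neg a.2.2] }
  rw [Nat.card_congr e, Nat.card_sum]

theorem not_reaches_child {p : Fin n → Option (Fin n)} (hf : IsRootedForest p)
    {v u : Fin n} (hvu : p v = some u) :
    ¬ Reaches (Function.update p v none) u v := by
  intro hx
  set q := Function.update p v none with hqdef
  have hj : parentIter q (Nat.find hx) u = some v := Nat.find_spec hx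
  have hmin : ∀ i, i < Nat.find hx → parentIter q i u ≠ some v :=
    fun i hi => Nat.find_min hx hi
  have hpq : ∀ w, w ≠ v → q w = p w := fun w hw => Function.update_of_ne hw _ _
  have h1 : parentIter p (Nat.find hx) u = some v :=
    (iter_congr hpq hmin _ le_rfl).trans hj
  have hone : parentIter p 1 v = some u := by
    show (some v).bind p = some u
    simpa using hvu
  have h2 : parentIter p (1 + Nat.find hx) v = some v := by
    rw [parentIter_add, hone, Option.bind_some]
    exact h1
  have := acyclic hf h2
  omega

theorem card_roots_update_some {p : Fin n → Option (Fin n)} {r u : Fin n} {k : ℕ}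
    (hr : p r = none) (hc : Nat.card {v : Fin n // p v = none} = k + 1) :
    Nat.card {v : Fin n // Function.update p r (some u) v = none} = k := by
  set q := Function.update p r (some u) with hqdef
  have hq : q r ≠ none := by simp [hqdef, Function.update_self]
  have h1 := card_roots_update_none (p := q) (x := r) hq
  have h2 : Function.update q r none = p := by
    rw [hqdef, Function.update_idem]
    exact Function.update_eq_self_iff.2 hr.symm
  rw [h2, hc] at h1
  omega

abbrev Fk (n k : ℕ) := {p : Fin n → Option (Fin n) //
    IsRootedForest p ∧ Nat.card {v : Fin n // p v = none} = k}

abbrev TA (n k : ℕ) := {q : (Fin n → Option (Fin n)) × Fin n //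
    IsRootedForest q.1 ∧ Nat.card {v : Fin n // q.1 v = none} = k ∧ q.1 q.2 ≠ none}

abbrev TB (n k : ℕ) := {q : (Fin n → Option (Fin n)) × (Fin n × Fin n) //
    IsRootedForest q.1 ∧ Nat.card {v : Fin n // q.1 v = none} = k + 1 ∧
      q.1 q.2.1 = none ∧ ¬ Reaches q.1 q.2.2 q.2.1}

def eA (n k : ℕ) : TA n k ≃ Σ p : Fk n k, {v : Fin n // p.1 v ≠ none} where
  toFun a := ⟨⟨a.1.1, a.2.1, a.2.2.1⟩, ⟨a.1.2, a.2.2.2⟩⟩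
  invFun s := ⟨(s.1.1, s.2.1), s.1.2.1, s.1.2.2, s.2.2⟩
  left_inv a := rfl
  right_inv s := rfl

def eB (n k : ℕ) : TB n k ≃
    Σ p : Fk n (k + 1), {x : Fin n × Fin n // p.1 x.1 = none ∧ ¬ Reaches p.1 x.2 x.1} where
  toFun b := ⟨⟨b.1.1, b.2.1, b.2.2.1⟩, ⟨b.1.2, b.2.2.2.1, b.2.2.2.2⟩⟩
  invFun s := ⟨(s.1.1, s.2.1), s.1.2.1, s.1.2.2, s.2.2.1, s.2.2.2⟩
  left_inv b := rfl
  right_inv s := rfl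

theorem fiberB {p : Fin n → Option (Fin n)} {k : ℕ} (hp : IsRootedForest p)
    (hk : Nat.card {v : Fin n // p v = none} = k + 1) :
    Nat.card {x : Fin n × Fin n // p x.1 = none ∧ ¬ Reaches p x.2 x.1} = k * n := by
  have e1 : {x : Fin n × Fin n // p x.1 = none} ≃ {r : Fin n // p r = none} × Fin n :=
    { toFun := fun x => (⟨x.1.1, x.2⟩, x.1.2)
      invFun := fun y => ⟨(y.1.1, y.2), y.1.2⟩
      left_inv := fun x => rfl
      right_inv := fun y => rfl }
  have c1 : Nat.card {x : Fin n × Fin n // p x.1 = none} = (k + 1) * n := by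
    rw [Nat.card_congr e1, Nat.card_prod, hk, Nat.card_eq_fintype_card (α := Fin n),
      Fintype.card_fin]
  have e2 : {x : Fin n × Fin n // p x.1 = none ∧ Reaches p x.2 x.1} ≃ Fin n :=
    { toFun := fun x => x.1.2
      invFun := fun w => ⟨(rootOf hp w, w), p_rootOf hp w, reaches_rootOf hp w⟩
      left_inv := fun x => by
        obtain ⟨⟨r, w⟩, h1, j, hj⟩ := x
        apply Subtype.ext
        have hru : rootOf hp w = r := rootOf_unique hp hj h1
        simp [hru]
      right_inv := fun w => rfl }
  have c2 : Nat.card {x : Fin n × Fin n // p x.1 = none ∧ Reaches p x.2 x.1} = n := by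
    rw [Nat.card_congr e2, Nat.card_eq_fintype_card (α := Fin n), Fintype.card_fin]
  have split := card_subtype_and_split (fun x : Fin n × Fin n => p x.1 = none)
    (fun x => Reaches p x.2 x.1)
  rw [c1, c2, Nat.add_mul, one_mul] at split
  omega

noncomputable def mainEquiv (n k : ℕ) : TA n k ≃ TB n k where
  toFun a :=
    ⟨(Function.update a.1.1 a.1.2 none, a.1.2,
        (a.1.1 a.1.2).get (Option.isSome_iff_ne_none.2 a.2.2.2)),
      isRootedForest_update_none a.2.1 a.1.2,
      by rw [card_roots_update_none a.2.2.2, a.2.2.1],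
      Function.update_self _ _ _,
      not_reaches_child a.2.1 (Option.some_get _).symm⟩
  invFun b :=
    ⟨(Function.update b.1.1 b.1.2.1 (some b.1.2.2), b.1.2.1),
      isRootedForest_update_some b.2.1 b.2.2.2.1 b.2.2.2.2,
      card_roots_update_some b.2.2.2.1 b.2.2.1,
      by simp [Function.update_self]⟩
  left_inv a := by
    apply Subtype.ext
    obtain ⟨⟨p, v⟩, hf, hc, hv⟩ := a
    apply Prod.ext
    · show Function.update (Function.update p v none) v (some ((p v).get _)) = p
      rw [Function.update_idem]
      exact Function.update_eq_self_iff.2 (Option.some_get _)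
    · rfl
  right_inv b := by
    apply Subtype.ext
    obtain ⟨⟨p, r, u⟩, hf, hc, hr, hnr⟩ := b
    apply Prod.ext
    · show Function.update (Function.update p r (some u)) r none = p
      rw [Function.update_idem]
      exact Function.update_eq_self_iff.2 hr.symm
    · apply Prod.ext
      · rfl
      · show (Function.update p r (some u) r).get _ = u
        have hqr : Function.update p r (some u) r = some u := Function.update_self _ _ _
        exact Option.some_injective _ ((Option.some_get _).trans hqr)

theorem rec_step (n k : ℕ) :
    Nat.card (Fk n k) * (n - k) = Nat.card (Fk n (k + 1)) * (k * n) := by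
  have hA : Nat.card (TA n k) = Nat.card (Fk n k) * (n - k) := by
    rw [Nat.card_congr (eA n k)]
    exact card_sigma_const (fun p => card_nonroots p.2.2)
  have hB : Nat.card (TB n k) = Nat.card (Fk n (k + 1)) * (k * n) := by
    rw [Nat.card_congr (eB n k)]
    exact card_sigma_const (fun p => fiberB p.2.1 p.2.2)
  rw [← hA, ← hB, Nat.card_congr (mainEquiv n k)]

theorem all_roots {p : Fin n → Option (Fin n)}
    (h : Nat.card {v : Fin n // p v = none} = n) : ∀ v, p v = none := by
  classical
  rw [nat_card_subtype] at h
  have huniv : Finset.univ.filter (fun v => p v = none) = Finset.univ :=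
    Finset.eq_univ_of_card _ (h.trans (Fintype.card_fin n).symm)
  intro v
  have := huniv ▸ Finset.mem_univ v
  exact (Finset.mem_filter.1 this).2

theorem base_case : Nat.card (Fk n n) = 1 := by
  have h0 : IsRootedForest (fun _ : Fin n => (none : Option (Fin n))) :=
    fun v => ⟨1, by simp [parentIter]⟩
  have hall : Nat.card {v : Fin n // (fun _ : Fin n => (none : Option (Fin n))) v = none} = n := by
    rw [Nat.card_congr (Equiv.subtypeUnivEquiv (fun v => rfl)),
      Nat.card_eq_fintype_card, Fintype.card_fin]
  rw [Nat.card_eq_one_iff_unique]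
  constructor
  · constructor
    intro ⟨p, _, hp⟩ ⟨q, _, hq⟩
    apply Subtype.ext
    funext v
    show p v = q v
    rw [all_roots hp v, all_roots hq v]
  · exact ⟨⟨fun _ => none, h0, hall⟩⟩

theorem main_count (hn : 1 ≤ n) :
    ∀ d k, 1 ≤ k → k + d = n →
      Nat.card (Fk n k) = Nat.choose (n - 1) (k - 1) * n ^ (n - k) := by
  intro d
  induction d with
  | zero =>
    intro k hk hkd
    have : k = n := by omega
    subst this
    rw [base_case]
    simp [Nat.sub_self]
  | succ d ih =>
    intro k hk hkd
    have hkn : k < n := by omega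
    have h1 := rec_step n k
    have h2 := ih (k + 1) (by omega) (by omega)
    rw [h2] at h1
    have e1 : Nat.choose (n - 1) k * k = Nat.choose (n - 1) (k - 1) * (n - k) := by
      have h3 := Nat.choose_succ_right_eq (n - 1) (k - 1)
      rw [show k - 1 + 1 = k by omega, show n - 1 - (k - 1) = n - k by omega] at h3
      exact h3
    have e2 : n - (k + 1) + 1 = n - k := by omega
    have key : Nat.choose (n - 1) k * n ^ (n - (k + 1)) * (k * n)
        = Nat.choose (n - 1) (k - 1) * n ^ (n - k) * (n - k) := by
      calc Nat.choose (n - 1) k * n ^ (n - (k + 1)) * (k * n)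
          = (Nat.choose (n - 1) k * k) * (n ^ (n - (k + 1)) * n) := by ring
        _ = (Nat.choose (n - 1) (k - 1) * (n - k)) * n ^ (n - (k + 1) + 1) := by
            rw [e1, pow_succ]
        _ = Nat.choose (n - 1) (k - 1) * n ^ (n - k) * (n - k) := by rw [e2]; ring
    simp only [Nat.add_sub_cancel] at h1
    rw [key] at h1
    exact Nat.eq_of_mul_eq_mul_right (by omega) h1

end ForestProof

theorem forest_count (n k : ℕ) (hn : 1 ≤ n) (hk : 1 ≤ k) (hkn : k ≤ n) :
    Nat.card {p : Fin n → Option (Fin n) //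
        IsRootedForest p ∧ Nat.card {v : Fin n // p v = none} = k}
      = Nat.choose (n - 1) (k - 1) * n ^ (n - k)
    ∧ ((Nat.choose (n - 1) (k - 1) * n ^ (n - k) : ℕ) : ℚ)
      = (Nat.choose n k : ℚ) * k * (n : ℚ) ^ ((n : ℤ) - k - 1) := by
  constructor
  · exact ForestProof.main_count hn (n - k) k hk (by omega)
  · have hn0 : (n : ℚ) ≠ 0 := by
      exact_mod_cast (Nat.pos_of_ne_zero (by omega)).ne'
    have hchoose : n * Nat.choose (n - 1) (k - 1) = Nat.choose n k * k := by
      have h := Nat.add_one_mul_choose_eq (n - 1) (k - 1)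
      rw [show n - 1 + 1 = n by omega, show k - 1 + 1 = k by omega] at h
      exact h
    have hzc : ((n : ℤ) - k - 1) + 1 = ((n - k : ℕ) : ℤ) := by omega
    have hz : (n : ℚ) ^ ((n : ℤ) - k - 1) * n = (n : ℚ) ^ ((n - k : ℕ)) := by
      rw [← zpow_natCast (n : ℚ) (n - k), ← hzc, zpow_add_one₀ hn0]
    push_cast
    have : (Nat.choose n k : ℚ) * k * (n : ℚ) ^ ((n : ℤ) - k - 1) * n
        = (Nat.choose (n - 1) (k - 1) : ℚ) * (n : ℚ) ^ (n - k) * n := by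
      calc (Nat.choose n k : ℚ) * k * (n : ℚ) ^ ((n : ℤ) - k - 1) * n
          = ((Nat.choose n k * k : ℕ) : ℚ) * ((n : ℚ) ^ ((n : ℤ) - k - 1) * n) := by
            push_cast; ring
        _ = ((n * Nat.choose (n - 1) (k - 1) : ℕ) : ℚ) * (n : ℚ) ^ ((n - k : ℕ)) := by
            rw [← hchoose, hz]
        _ = (Nat.choose (n - 1) (k - 1) : ℚ) * (n : ℚ) ^ (n - k) * n := by
            push_cast; ring
    exact mul_right_cancel₀ hn0 this.symm
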